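/- Let S be a semigroup generated by a finite set X, and let Γ be the left Cayley graph of S with respect to X (vertices S, directed edge from s to t iff xs = t for some x ∈ X). Then S satisfies the Følner condition FC if and only if Γ has isoperimetric number zero, i.e., for every ε > 0 there is a nonempty finite set A ⊆ S with |∂A| < ε|A|, where ∂A = {t ∉ A : ∃ a ∈ A, x ∈ X, xa = t}. -/

import Mathlib

/-- The product of the nonempty list `a :: l` in a semigroup. -/
def prodOf {S : Type*} [Semigroup S] : S → List S → S
  | a, [] => a
  | a, b :: l => prodOf (a * b) l

section Aux

variable {S : Type*} [Semigroup S] [DecidableEq S]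

omit [DecidableEq S] in
lemma prodOf_append_singleton (a b : S) (l : List S) :
    prodOf a (l ++ [b]) = prodOf a l * b := by
  induction l generalizing a with
  | nil => rfl
  | cons c l ih => simpa [prodOf] using ih (a * c)

/-- The out-boundary of `A` as a finset. -/
def bd (X A : Finset S) : Finset S := ((X ×ˢ A).image fun p => p.1 * p.2) \ A

lemma bd_set_eq (X A : Finset S) :
    {t : S | t ∉ A ∧ ∃ a ∈ A, ∃ x ∈ X, x * a = t} = ↑(bd X A) := by
  ext t
  simp only [Set.mem_setOf_eq, bd, Finset.coe_sdiff, Set.mem_diff, Finset.coe_image,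
    Set.mem_image, Finset.mem_coe, Finset.mem_product, Prod.exists]
  aesop

/-- Iterated thickening of `A` by the boundary. -/
def iterB (X A : Finset S) : ℕ → Finset S
  | 0 => A
  | n + 1 => iterB X A n ∪ bd X (iterB X A n)

lemma iterB_mono (X A : Finset S) : Monotone (iterB X A) := by
  apply monotone_nat_of_le_succ
  intro n
  exact Finset.subset_union_left

lemma mem_mul_iterB {X A : Finset S} {x t : S} {n : ℕ} (hx : x ∈ X)
    (ht : t ∈ iterB X A n) : x * t ∈ iterB X A (n + 1) := by
  by_cases h : x * t ∈ iterB X A n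
  · exact Finset.mem_union_left _ h
  · refine Finset.mem_union_right _ ?_
    refine Finset.mem_sdiff.2 ⟨?_, h⟩
    exact Finset.mem_image.2 ⟨(x, t), Finset.mem_product.2 ⟨hx, ht⟩, rfl⟩

lemma bd_iterB_card_le (X A : Finset S) (n : ℕ) :
    (bd X (iterB X A (n + 1))).card ≤ X.card * (bd X (iterB X A n)).card := by
  have hsub : bd X (iterB X A (n + 1)) ⊆
      (X ×ˢ bd X (iterB X A n)).image fun p => p.1 * p.2 := by
    intro t ht
    obtain ⟨ht1, ht2⟩ := Finset.mem_sdiff.1 ht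
    obtain ⟨⟨x, b⟩, hp, rfl⟩ := Finset.mem_image.1 ht1
    obtain ⟨hx, hb⟩ := Finset.mem_product.1 hp
    have hb' : b ∈ bd X (iterB X A n) := by
      rcases Finset.mem_union.1 hb with hb1 | hb1
      · exact absurd (mem_mul_iterB hx hb1) ht2
      · exact hb1
    exact Finset.mem_image.2 ⟨(x, b), Finset.mem_product.2 ⟨hx, hb'⟩, rfl⟩
  calc (bd X (iterB X A (n + 1))).card
      ≤ ((X ×ˢ bd X (iterB X A n)).image fun p => p.1 * p.2).card :=
        Finset.card_le_card hsub
    _ ≤ (X ×ˢ bd X (iterB X A n)).card := Finset.card_image_le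
    _ = X.card * (bd X (iterB X A n)).card := Finset.card_product _ _

lemma bd_iterB_card_pow (X A : Finset S) (n : ℕ) :
    (bd X (iterB X A n)).card ≤ X.card ^ n * (bd X A).card := by
  induction n with
  | zero => simp [iterB]
  | succ n ih =>
    calc (bd X (iterB X A (n + 1))).card ≤ X.card * (bd X (iterB X A n)).card :=
          bd_iterB_card_le X A n
      _ ≤ X.card * (X.card ^ n * (bd X A).card) := Nat.mul_le_mul_left _ ih
      _ = X.card ^ (n + 1) * (bd X A).card := by ring

lemma iterB_card_le (X A : Finset S) (n : ℕ) :
    (iterB X A n).card ≤ A.card + (∑ i ∈ Finset.range n, X.card ^ i) * (bd X A).card := by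
  induction n with
  | zero => simp [iterB]
  | succ n ih =>
    calc (iterB X A (n + 1)).card ≤ (iterB X A n).card + (bd X (iterB X A n)).card :=
          Finset.card_union_le _ _
      _ ≤ (A.card + (∑ i ∈ Finset.range n, X.card ^ i) * (bd X A).card)
            + X.card ^ n * (bd X A).card := Nat.add_le_add ih (bd_iterB_card_pow X A n)
      _ = A.card + (∑ i ∈ Finset.range (n + 1), X.card ^ i) * (bd X A).card := by
          rw [Finset.sum_range_succ]; ring

lemma prodOf_mul_mem_iterB {X A : Finset S} (l : List S) :
    ∀ (a t : S) (n : ℕ), a ∈ X → (∀ x ∈ l, x ∈ X) → t ∈ iterB X A n →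
      prodOf a l * t ∈ iterB X A (n + l.length + 1) := by
  induction l using List.reverseRecOn with
  | nil =>
    intro a t n ha _ ht
    exact mem_mul_iterB ha ht
  | append_singleton l b ih =>
    intro a t n ha hl ht
    rw [prodOf_append_singleton, mul_assoc]
    have hb : b ∈ X := hl b (by simp)
    have h1 : b * t ∈ iterB X A (n + 1) := mem_mul_iterB hb ht
    have := ih a (b * t) (n + 1) ha (fun x hx => hl x (by simp [hx])) h1
    simpa [List.length_append, Nat.add_comm, Nat.add_assoc, Nat.add_left_comm] using this

end Aux

/-- A semigroup generated by a finite set `X` satisfies FC iff its left Cayley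
graph (edge `s → t` iff `x * s = t` for some `x ∈ X`) has isoperimetric
number zero. -/
theorem fc_iff_isoperimetric_zero {S : Type*} [Semigroup S] [DecidableEq S]
    (X : Finset S)
    (hgen : ∀ s : S, ∃ (a : S) (l : List S), a ∈ X ∧ (∀ x ∈ l, x ∈ X) ∧ s = prodOf a l) :
    (∀ H : Finset S, ∀ ε : ℝ, 0 < ε → ∃ F : Finset S, F.Nonempty ∧
        ∀ s ∈ H, ((F.image (s * ·) \ F).card : ℝ) ≤ ε * F.card) ↔
      (∀ ε : ℝ, 0 < ε → ∃ A : Finset S, A.Nonempty ∧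
        (({t : S | t ∉ A ∧ ∃ a ∈ A, ∃ x ∈ X, x * a = t}).ncard : ℝ) < ε * A.card) := by
  constructor
  · -- FC → isoperimetric zero
    intro hFC ε hε
    have hc1 : (0 : ℝ) < (X.card : ℝ) + 1 := by positivity
    obtain ⟨F, hFne, hF⟩ := hFC X (ε / ((X.card : ℝ) + 1)) (by positivity)
    refine ⟨F, hFne, ?_⟩
    rw [bd_set_eq, Set.ncard_coe_finset]
    have hsub : bd X F ⊆ X.biUnion fun x => F.image (x * ·) \ F := by
      intro t ht
      obtain ⟨ht1, ht2⟩ := Finset.mem_sdiff.1 ht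
      obtain ⟨⟨x, a⟩, hp, rfl⟩ := Finset.mem_image.1 ht1
      obtain ⟨hx, ha⟩ := Finset.mem_product.1 hp
      exact Finset.mem_biUnion.2 ⟨x, hx,
        Finset.mem_sdiff.2 ⟨Finset.mem_image.2 ⟨a, ha, rfl⟩, ht2⟩⟩
    have hcard : ((bd X F).card : ℝ) ≤
        ∑ x ∈ X, (((F.image (x * ·) \ F).card : ℝ)) := by
      calc ((bd X F).card : ℝ) ≤ ((X.biUnion fun x => F.image (x * ·) \ F).card : ℝ) := by
            exact_mod_cast Finset.card_le_card hsub
        _ ≤ _ := by exact_mod_cast Finset.card_biUnion_le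
    have hsum : (∑ x ∈ X, (((F.image (x * ·) \ F).card : ℝ)))
        ≤ (X.card : ℝ) * (ε / ((X.card : ℝ) + 1) * F.card) := by
      calc (∑ x ∈ X, (((F.image (x * ·) \ F).card : ℝ)))
          ≤ ∑ _x ∈ X, ε / ((X.card : ℝ) + 1) * F.card :=
            Finset.sum_le_sum fun x hx => hF x hx
        _ = (X.card : ℝ) * (ε / ((X.card : ℝ) + 1) * F.card) := by
            rw [Finset.sum_const, nsmul_eq_mul]
    have hFpos : (0 : ℝ) < F.card := by exact_mod_cast hFne.card_pos
    have hlt : (X.card : ℝ) * (ε / ((X.card : ℝ) + 1) * F.card) < ε * F.card := by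
      rw [div_mul_eq_mul_div, mul_div_assoc', div_lt_iff₀ hc1]
      nlinarith [mul_pos hε hFpos]
    linarith [hcard.trans hsum]
  · -- isoperimetric zero → FC
    intro hIso H ε hε
    choose a l ha hl hprod using hgen
    set N : ℕ := (H.sup fun s => (l s).length) + 1 with hN
    set C : ℝ := (∑ i ∈ Finset.range N, (X.card : ℝ) ^ i) + 1 with hC
    have hCpos : 0 < C := by
      have : 0 ≤ ∑ i ∈ Finset.range N, (X.card : ℝ) ^ i :=
        Finset.sum_nonneg fun i _ => pow_nonneg (Nat.cast_nonneg _) _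
      linarith
    obtain ⟨F, hFne, hFbd⟩ := hIso (ε / C) (div_pos hε hCpos)
    rw [bd_set_eq, Set.ncard_coe_finset] at hFbd
    refine ⟨F, hFne, ?_⟩
    intro s hs
    -- the image of F under s lands in iterB X F N
    have himg : F.image (s * ·) \ F ⊆ iterB X F N \ F := by
      intro t ht
      obtain ⟨ht1, ht2⟩ := Finset.mem_sdiff.1 ht
      obtain ⟨u, hu, rfl⟩ := Finset.mem_image.1 ht1
      refine Finset.mem_sdiff.2 ⟨?_, ht2⟩
      have hmem : prodOf (a s) (l s) * u ∈ iterB X F (0 + (l s).length + 1) :=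
        prodOf_mul_mem_iterB (l s) (a s) u 0 (ha s) (hl s) hu
      rw [← hprod s] at hmem
      refine iterB_mono X F ?_ hmem
      have : (l s).length ≤ H.sup fun s => (l s).length :=
        Finset.le_sup (f := fun s => (l s).length) hs
      omega
    have hFsub : F ⊆ iterB X F N := iterB_mono X F (Nat.zero_le N)
    have hcard1 : (F.image (s * ·) \ F).card ≤ (iterB X F N).card - F.card := by
      calc (F.image (s * ·) \ F).card ≤ (iterB X F N \ F).card :=
            Finset.card_le_card himg
        _ = (iterB X F N).card - F.card := Finset.card_sdiff_of_subset hFsub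
    have hcard2 : (F.image (s * ·) \ F).card ≤
        (∑ i ∈ Finset.range N, X.card ^ i) * (bd X F).card := by
      have := iterB_card_le X F N
      omega
    have hcast : ((F.image (s * ·) \ F).card : ℝ) ≤
        (∑ i ∈ Finset.range N, (X.card : ℝ) ^ i) * (bd X F).card := by
      exact_mod_cast Nat.cast_le.2 hcard2
    have hbd0 : (0 : ℝ) ≤ ((bd X F).card : ℝ) := Nat.cast_nonneg _
    have hstep : (∑ i ∈ Finset.range N, (X.card : ℝ) ^ i) * (bd X F).card
        ≤ C * ((bd X F).card : ℝ) := by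
      apply mul_le_mul_of_nonneg_right _ hbd0
      linarith
    have hfin : C * ((bd X F).card : ℝ) < ε * F.card := by
      have := (mul_lt_mul_iff_right₀ hCpos).2 hFbd
      calc C * ((bd X F).card : ℝ) < C * (ε / C * F.card) := this
        _ = ε * F.card := by rw [← mul_assoc, mul_div_assoc', mul_div_cancel_left₀ ε hCpos.ne']
    linarith
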